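/- Let X be a polyadic space of weight κ and let λ be a cardinal with d(X) ≤ λ ≤ κ. Then X ∈ Γ(λ), i.e. every closed G_λ-set in X has density ≤ λ. -/

import Mathlib

open Cardinal Set Function

universe u

noncomputable section

/-- The density of a topological space: least cardinality of a dense subset. -/
def tdensity (X : Type u) [TopologicalSpace X] : Cardinal.{u} :=
  sInf {c : Cardinal.{u} | ∃ s : Set X, Dense s ∧ #s = c}

/-- The weight of a topological space: least cardinality of a base. -/
def tweight (X : Type u) [TopologicalSpace X] : Cardinal.{u} :=
  sInf {c : Cardinal.{u} | ∃ B : Set (Set X), TopologicalSpace.IsTopologicalBasis B ∧ #B = c}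

/-- The π-weight: least cardinality of a π-base. -/
def piWeight (X : Type u) [TopologicalSpace X] : Cardinal.{u} :=
  sInf {c : Cardinal.{u} | ∃ B : Set (Set X),
    (∀ U ∈ B, IsOpen U ∧ U.Nonempty) ∧
    (∀ V : Set X, IsOpen V → V.Nonempty → ∃ U ∈ B, U ⊆ V) ∧ #B = c}

/-- ĉ(X): the least cardinal κ such that X has no pairwise disjoint family of κ
nonempty open sets. -/
def hatCell (X : Type u) [TopologicalSpace X] : Cardinal.{u} :=
  sInf {c : Cardinal.{u} | ¬ ∃ 𝒰 : Set (Set X),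
    (∀ U ∈ 𝒰, IsOpen U ∧ U.Nonempty) ∧ 𝒰.PairwiseDisjoint id ∧ #𝒰 = c}

/-- `H` is a closed G_λ set: closed and the intersection of at most λ open sets. -/
def IsClosedGLambda (lam : Cardinal.{u}) {X : Type u} [TopologicalSpace X] (H : Set X) : Prop :=
  IsClosed H ∧ ∃ 𝒰 : Set (Set X), (∀ U ∈ 𝒰, IsOpen U) ∧ #𝒰 ≤ lam ∧ H = ⋂₀ 𝒰

/-- X ∈ Γ(λ): every closed G_λ set has density ≤ λ. -/
def InGamma (lam : Cardinal.{u}) (X : Type u) [TopologicalSpace X] : Prop :=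
  ∀ H : Set X, IsClosedGLambda lam H → tdensity ↥H ≤ lam

/-- `S` witnesses `X ∈ Δ(λ)`. -/
def DeltaWitness (lam : Cardinal.{u}) (X : Type u) [TopologicalSpace X] (S : Set X) : Prop :=
  Dense S ∧
  (∀ T : Set X, T ⊆ S → #T < lam → tweight ↥(closure T) < lam) ∧
  (∀ (Y : Type u) (_ : TopologicalSpace Y), T2Space Y → ∀ f : X → Y,
     Continuous f → Surjective f → tweight Y = lam → #(f '' S) = lam)

/-- X ∈ Δ(λ). -/
def InDelta (lam : Cardinal.{u}) (X : Type u) [TopologicalSpace X] : Prop :=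
  lam ≤ tweight X ∧ ∃ S : Set X, DeltaWitness lam X S

/-- A canonical discrete space of cardinality `c`. -/
instance (c : Cardinal.{u}) : TopologicalSpace c.out := ⊥

instance (c : Cardinal.{u}) : DiscreteTopology c.out := ⟨rfl⟩

/-- A(μ): one-point compactification of a discrete space of cardinality μ. -/
def ACompact (μ : Cardinal.{u}) : Type u := OnePoint μ.out

instance (μ : Cardinal.{u}) : TopologicalSpace (ACompact μ) :=
  inferInstanceAs (TopologicalSpace (OnePoint μ.out))

/-- A(μ)^κ. -/
def APow (μ κ : Cardinal.{u}) : Type u := κ.out → ACompact μ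

instance (μ κ : Cardinal.{u}) : TopologicalSpace (APow μ κ) :=
  inferInstanceAs (TopologicalSpace (κ.out → ACompact μ))

/-- The set of finite-support points of A(μ)^κ. -/
def finSupport (μ κ : Cardinal.{u}) : Set (APow μ κ) :=
  {x | {ξ | x ξ ≠ (OnePoint.infty : OnePoint μ.out)}.Finite}

/-- X is polyadic: a continuous image of some A(μ)^κ. -/
def IsPolyadic (X : Type u) [TopologicalSpace X] : Prop :=
  ∃ μ κ : Cardinal.{u}, ℵ₀ ≤ μ ∧ ∃ f : APow μ κ → X, Continuous f ∧ Surjective f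
lemma mk_finset_le' (β : Type u) : #(Finset β) ≤ max #β ℵ₀ := by
  cases finite_or_infinite β
  · haveI := Fintype.ofFinite β
    exact le_max_of_le_right (mk_le_aleph0)
  · exact (mk_finset_of_infinite β).le.trans (le_max_left _ _)

theorem gamma_aux {ι Z X : Type u} [TopologicalSpace Z] [DiscreteTopology Z]
    [TopologicalSpace X] [CompactSpace X] [T2Space X]
    (f : (ι → OnePoint Z) → X) (hfc : Continuous f) (hfs : Surjective f)
    (lam : Cardinal.{u}) (hlam : ℵ₀ ≤ lam) (h1 : tdensity X ≤ lam) :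
    InGamma lam X := by
  classical
  intro H hH
  obtain ⟨hHcl, 𝒰, h𝒰open, h𝒰card, hHeq⟩ := hH
  -- a dense subset of X of size ≤ lam
  obtain ⟨D, hDdense, hDcard⟩ : ∃ D : Set X, Dense D ∧ #D ≤ lam := by
    have hne : {c : Cardinal.{u} | ∃ s : Set X, Dense s ∧ #s = c}.Nonempty :=
      ⟨#(Set.univ : Set X), Set.univ, dense_univ, rfl⟩
    obtain ⟨D, hD, hDc⟩ := csInf_mem hne
    exact ⟨D, hD, hDc.le.trans h1⟩
  -- Zorn: minimal closed K₀ with f '' K₀ = univ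
  obtain ⟨K₀, hK₀min⟩ : ∃ K₀, Minimal (· ∈ {C : Set (ι → OnePoint Z) | IsClosed C ∧ f '' C = Set.univ}) K₀ := by
    apply zorn_superset
    intro c hcS hchain
    rcases c.eq_empty_or_nonempty with rfl | hcne
    · exact ⟨Set.univ, ⟨isClosed_univ, by rw [image_univ, Surjective.range_eq hfs]⟩, by simp⟩
    · refine ⟨⋂₀ c, ⟨isClosed_sInter fun s hs => (hcS hs).1, ?_⟩,
        fun s hs => sInter_subset_of_mem hs⟩
      apply eq_univ_of_forall
      intro x
      haveI : Nonempty c := hcne.coe_sort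
      have hne : (⋂ (C : c), ((C : Set (ι → OnePoint Z)) ∩ f ⁻¹' {x})).Nonempty := by
        apply IsCompact.nonempty_iInter_of_directed_nonempty_isCompact_isClosed
        · intro C₁ C₂
          rcases hchain.total C₁.2 C₂.2 with h | h
          · exact ⟨C₁, Subset.rfl, inter_subset_inter_left _ h⟩
          · exact ⟨C₂, inter_subset_inter_left _ h, Subset.rfl⟩
        · intro C
          have := (hcS C.2).2
          have hx : x ∈ f '' (C : Set (ι → OnePoint Z)) := this ▸ mem_univ x
          obtain ⟨y, hy, hyx⟩ := hx
          exact ⟨y, hy, by simpa using hyx⟩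
        · intro C
          exact ((hcS C.2).1.isCompact).inter_right (IsClosed.preimage hfc isClosed_singleton)
        · intro C
          exact ((hcS C.2).1).inter (IsClosed.preimage hfc isClosed_singleton)
      obtain ⟨y, hy⟩ := hne
      simp only [mem_iInter, mem_inter_iff, mem_preimage, mem_singleton_iff] at hy
      refine ⟨y, ?_, (hy ⟨hcne.choose, hcne.choose_spec⟩).2⟩
      rw [mem_sInter]
      intro C hC
      exact (hy ⟨C, hC⟩).1
  obtain ⟨⟨hK₀cl, hK₀surj⟩, hK₀min⟩ := hK₀min
  -- lifted dense set D₀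
  have hgex : ∀ d : D, ∃ y : ι → OnePoint Z, y ∈ K₀ ∧ f y = ↑d := by
    intro d
    have : (d : X) ∈ f '' K₀ := hK₀surj ▸ mem_univ _
    obtain ⟨y, hy, hyd⟩ := this
    exact ⟨y, hy, hyd⟩
  choose g hg1 hg2 using hgex
  set D₀ : Set (ι → OnePoint Z) := range g with hD₀def
  have hD₀sub : D₀ ⊆ K₀ := by rintro _ ⟨d, rfl⟩; exact hg1 d
  have hD₀card : #D₀ ≤ lam := mk_range_le.trans hDcard
  have hD₀dense : ∀ O : Set (ι → OnePoint Z), IsOpen O → (O ∩ K₀).Nonempty →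
      (O ∩ D₀).Nonempty := by
    rintro O hO ⟨x, hxO, hxK₀⟩
    by_contra hemp
    rw [not_nonempty_iff_eq_empty] at hemp
    have hsub : D₀ ⊆ K₀ \ O := fun y hy => ⟨hD₀sub hy, fun hyO =>
      (eq_empty_iff_forall_notMem.1 hemp y) ⟨hyO, hy⟩⟩
    have hCcl : IsClosed (K₀ \ O) := hK₀cl.sdiff hO
    have hCim : f '' (K₀ \ O) = Set.univ := by
      apply Subset.antisymm (subset_univ _)
      have hclosed : IsClosed (f '' (K₀ \ O)) :=
        (hCcl.isCompact.image hfc).isClosed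
      have hDsub : D ⊆ f '' (K₀ \ O) := by
        rintro d hd
        exact ⟨g ⟨d, hd⟩, hsub ⟨⟨d, hd⟩, rfl⟩, hg2 ⟨d, hd⟩⟩
      calc Set.univ = closure D := (hDdense.closure_eq).symm
        _ ⊆ closure (f '' (K₀ \ O)) := closure_mono hDsub
        _ = f '' (K₀ \ O) := hclosed.closure_eq
    have : K₀ ⊆ K₀ \ O := hK₀min ⟨hCcl, hCim⟩ diff_subset
    exact (this hxK₀).2 hxO
  -- the used value sets
  set N : ι → Set Z := fun ξ => {α | ∃ x ∈ K₀, x ξ = OnePoint.some α} with hNdef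
  have hNcard : ∀ ξ : ι, #(N ξ) ≤ lam := by
    intro ξ
    have hopen : ∀ α : Z, IsOpen {x : ι → OnePoint Z | x ξ = OnePoint.some α} := by
      intro α
      have h1 : IsOpen ({OnePoint.some α} : Set (OnePoint Z)) := by
        rw [OnePoint.isOpen_iff_of_notMem]
        · exact isOpen_discrete _
        · simp only [mem_singleton_iff]
          exact (OnePoint.infty_ne_coe α)
      exact h1.preimage (continuous_apply (A := fun _ : ι => OnePoint Z) ξ)
    have hV : ∀ α : ↥(N ξ), ∃ d : ↥D,
        (d : X) ∉ f '' (K₀ \ {x : ι → OnePoint Z | x ξ = OnePoint.some ↑α}) := by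
      intro α
      have hcl : IsClosed (K₀ \ {x : ι → OnePoint Z | x ξ = OnePoint.some ↑α}) :=
        hK₀cl.sdiff (hopen _)
      have him : IsClosed (f '' (K₀ \ {x : ι → OnePoint Z | x ξ = OnePoint.some ↑α})) :=
        (hcl.isCompact.image hfc).isClosed
      have hproper : f '' (K₀ \ {x : ι → OnePoint Z | x ξ = OnePoint.some ↑α}) ≠ Set.univ := by
        intro heq
        have hsub2 : K₀ ⊆ K₀ \ {x : ι → OnePoint Z | x ξ = OnePoint.some ↑α} :=
          hK₀min ⟨hcl, heq⟩ diff_subset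
        obtain ⟨x, hxK₀, hxC⟩ := α.2
        exact (hsub2 hxK₀).2 hxC
      have hVne : (f '' (K₀ \ {x : ι → OnePoint Z | x ξ = OnePoint.some ↑α}))ᶜ.Nonempty := by
        rw [nonempty_compl]; exact hproper
      obtain ⟨d, hd1, hd2⟩ := hDdense.inter_open_nonempty _ him.isOpen_compl hVne
      exact ⟨⟨d, hd2⟩, hd1⟩
    choose dfun hdfun using hV
    have hinj : Injective dfun := by
      intro α β hαβ
      have hd := hdfun α
      rw [hαβ] at hd
      have hd' := hdfun β
      have hmem : ((dfun β : X) : X) ∈ f '' K₀ := hK₀surj ▸ mem_univ _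
      obtain ⟨w, hwK₀, hwd⟩ := hmem
      have hwα : w ξ = OnePoint.some ↑α := by
        by_contra hne
        exact hd ⟨w, ⟨hwK₀, hne⟩, hwd⟩
      have hwβ : w ξ = OnePoint.some ↑β := by
        by_contra hne
        exact hd' ⟨w, ⟨hwK₀, hne⟩, hwd⟩
      have h2 := hwα.symm.trans hwβ
      exact Subtype.ext (Option.some_injective Z h2)
    exact (mk_le_of_injective hinj).trans hDcard
  -- K = f ⁻¹' H and coordinate determination
  set K : Set (ι → OnePoint Z) := f ⁻¹' H with hKdef
  have hKcl : IsClosed K := hHcl.preimage hfc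
  have hKcomp : IsCompact K := hKcl.isCompact
  have hbox : ∀ U ∈ 𝒰, ∃ F : Finset ι, ∀ x ∈ K, ∀ z : ι → OnePoint Z,
      (∀ ξ ∈ F, z ξ = x ξ) → f z ∈ U := by
    intro U hU
    have hKU : K ⊆ f ⁻¹' U := by
      intro x hx
      have hx2 : f x ∈ H := hx
      rw [hHeq] at hx2
      exact mem_sInter.1 hx2 U hU
    have hUopen : IsOpen (f ⁻¹' U) := (h𝒰open U hU).preimage hfc
    have hbas : ∀ x : ↥K, ∃ (I : Finset ι) (u : ∀ _ : ι, Set (OnePoint Z)),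
        (∀ a, a ∈ I → IsOpen (u a) ∧ (x : ι → OnePoint Z) a ∈ u a) ∧
        (I : Set ι).pi u ⊆ f ⁻¹' U := fun x => isOpen_pi_iff.1 hUopen x (hKU x.2)
    choose I uu huu hsub using hbas
    have hcover : K ⊆ ⋃ x : ↥K, (I x : Set ι).pi (uu x) := by
      intro x hx
      exact mem_iUnion.2 ⟨⟨x, hx⟩, fun a ha => (huu ⟨x, hx⟩ a ha).2⟩
    obtain ⟨t, ht⟩ := hKcomp.elim_finite_subcover (fun x : ↥K => (I x : Set ι).pi (uu x))
      (fun x => isOpen_set_pi (I x).finite_toSet (fun a ha => (huu x a ha).1)) hcover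
    refine ⟨t.biUnion (fun x => I x), ?_⟩
    intro x hx z hz
    have hx3 := ht hx
    rw [mem_iUnion₂] at hx3
    obtain ⟨x', hx't, hx'⟩ := hx3
    have hzmem : z ∈ (I x' : Set ι).pi (uu x') := by
      intro a ha
      have hza : z a = x a := hz a (Finset.mem_biUnion.2 ⟨x', hx't, by simpa using ha⟩)
      rw [hza]
      exact hx' a ha
    exact hsub x' hzmem
  choose F hF using hbox
  set A : Set ι := ⋃ (U : ↥𝒰), ((F ↑U U.2 : Finset ι) : Set ι) with hAdef
  have hAcard : #A ≤ lam := by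
    calc #A ≤ #↥𝒰 * ⨆ U : ↥𝒰, #((F ↑U U.2 : Finset ι) : Set ι) := mk_iUnion_le _
    _ ≤ lam * ℵ₀ := by
        apply mul_le_mul' h𝒰card
        apply ciSup_le'
        intro U
        exact mk_le_aleph0
    _ ≤ lam * lam := mul_le_mul' le_rfl hlam
    _ = lam := mul_eq_self hlam
  have hdet : ∀ x ∈ K, ∀ z : ι → OnePoint Z, (∀ ξ ∈ A, z ξ = x ξ) → z ∈ K := by
    intro x hx z hz
    have hzH : f z ∈ H := by
      rw [hHeq]
      refine mem_sInter.2 fun U hU => ?_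
      apply hF U hU x hx z
      intro ξ hξ
      exact hz ξ (mem_iUnion.2 ⟨⟨U, hU⟩, hξ⟩)
    exact hzH
  -- all values used on A-coordinates
  set Nall : Set Z := ⋃ ξ : ↥A, N ↑ξ with hNalldef
  have hNallcard : #Nall ≤ lam := by
    calc #Nall ≤ #↥A * ⨆ ξ : ↥A, #(N ↑ξ) := mk_iUnion_le _
    _ ≤ lam * lam := mul_le_mul' hAcard (ciSup_le' fun ξ => hNcard _)
    _ = lam := mul_eq_self hlam
  -- the index type for specifications
  have hβcard : #(↥A × (↥Nall ⊕ Finset ↥Nall)) ≤ lam := by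
    rw [mk_prod, lift_id, lift_id]
    have h2 : #(↥Nall ⊕ Finset ↥Nall) ≤ lam := by
      rw [mk_sum, lift_id, lift_id]
      have h3 : #(Finset ↥Nall) ≤ lam :=
        (mk_finset_le' ↥Nall).trans (max_le hNallcard hlam)
      calc #↥Nall + #(Finset ↥Nall) ≤ lam + lam := add_le_add hNallcard h3
      _ = lam := add_eq_self hlam
    calc #↥A * #(↥Nall ⊕ Finset ↥Nall) ≤ lam * lam := mul_le_mul' hAcard h2
    _ = lam := mul_eq_self hlam
  have hIdxcard : #(Finset (↥A × (↥Nall ⊕ Finset ↥Nall))) ≤ lam :=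
    (mk_finset_le' _).trans (max_le hβcard hlam)
  -- the specification open sets
  set O : Finset (↥A × (↥Nall ⊕ Finset ↥Nall)) → Set (ι → OnePoint Z) := fun j =>
    {z | ∀ q ∈ j, Sum.elim (fun ν : ↥Nall => z ↑q.1 = OnePoint.some ↑ν)
      (fun e : Finset ↥Nall => ∀ ν ∈ e, z ↑q.1 ≠ OnePoint.some ↑ν) q.2} with hOdef
  -- selection of witnesses
  have hselex : ∀ j : Finset (↥A × (↥Nall ⊕ Finset ↥Nall)), ∃ s : ι → OnePoint Z,
      ((K ∩ K₀) ∩ O j).Nonempty → s ∈ (K ∩ K₀) ∩ O j := by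
    intro j
    by_cases h : ((K ∩ K₀) ∩ O j).Nonempty
    · exact ⟨h.choose, fun _ => h.choose_spec⟩
    · exact ⟨fun _ => OnePoint.infty, fun hc => absurd hc h⟩
  choose sel hsel using hselex
  -- the candidate dense subset of H
  set cmb : (ι → OnePoint Z) → (ι → OnePoint Z) → (ι → OnePoint Z) :=
    fun s y ξ => if ξ ∈ A then s ξ else y ξ with hcmbdef
  set T : Set X := f '' {z | ∃ j : Finset (↥A × (↥Nall ⊕ Finset ↥Nall)),
    ((K ∩ K₀) ∩ O j).Nonempty ∧ ∃ y ∈ D₀, z = cmb (sel j) y} with hTdef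
  have hTH : T ⊆ H := by
    rintro _ ⟨z, ⟨j, hjne, y, hy, rfl⟩, rfl⟩
    have hs := hsel j hjne
    exact hdet (sel j) hs.1.1 _ (fun ξ hξ => if_pos hξ)
  have hTcard : #T ≤ lam := by
    have hsurj : {z | ∃ j : Finset (↥A × (↥Nall ⊕ Finset ↥Nall)),
        ((K ∩ K₀) ∩ O j).Nonempty ∧ ∃ y ∈ D₀, z = cmb (sel j) y} ⊆
        range (fun p : Finset (↥A × (↥Nall ⊕ Finset ↥Nall)) × ↥D₀ => cmb (sel p.1) ↑p.2) := by
      rintro z ⟨j, hj, y, hy, rfl⟩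
      exact ⟨(j, ⟨y, hy⟩), rfl⟩
    calc #T ≤ #{z | ∃ j : Finset (↥A × (↥Nall ⊕ Finset ↥Nall)),
        ((K ∩ K₀) ∩ O j).Nonempty ∧ ∃ y ∈ D₀, z = cmb (sel j) y} := mk_image_le
    _ ≤ #(range (fun p : Finset (↥A × (↥Nall ⊕ Finset ↥Nall)) × ↥D₀ => cmb (sel p.1) ↑p.2)) :=
        mk_le_mk_of_subset hsurj
    _ ≤ #(Finset (↥A × (↥Nall ⊕ Finset ↥Nall)) × ↥D₀) := mk_range_le
    _ ≤ lam := by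
        rw [mk_prod, lift_id, lift_id]
        calc #(Finset (↥A × (↥Nall ⊕ Finset ↥Nall))) * #↥D₀ ≤ lam * lam :=
          mul_le_mul' hIdxcard hD₀card
        _ = lam := mul_eq_self hlam
  -- density of T in H
  have hEdense : Dense (Subtype.val ⁻¹' T : Set ↥H) := by
    rw [dense_iff_inter_open]
    rintro W hW ⟨⟨h0, h0H⟩, hh0W⟩
    obtain ⟨V, hV, rfl⟩ := isOpen_induced_iff.1 hW
    have hh0V : h0 ∈ V := hh0W
    obtain ⟨x, hxK₀, hxh⟩ : h0 ∈ f '' K₀ := hK₀surj ▸ mem_univ _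
    have hxK : x ∈ K := by
      have : f x ∈ H := by rw [hxh]; exact h0H
      exact this
    have hxV : x ∈ f ⁻¹' V := by rw [mem_preimage, hxh]; exact hh0V
    obtain ⟨I, uu, huu, hsub⟩ := isOpen_pi_iff.1 (hV.preimage hfc) x hxV
    have hxiuu : ∀ i ∈ I, x i ∈ uu i := fun i hi => (huu i hi).2
    -- the specification induced by x and uu
    set spec : ↥A → (↥Nall ⊕ Finset ↥Nall) := fun ξ =>
      if hs : ∃ α : ↥Nall, x ↑ξ = OnePoint.some ↑α then Sum.inl hs.choose
      else if hfin : {ν : ↥Nall | OnePoint.some ↑ν ∉ uu ↑ξ}.Finite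
        then Sum.inr hfin.toFinset else Sum.inr ∅ with hspecdef
    have hJfin : {q : ↥A × (↥Nall ⊕ Finset ↥Nall) | ↑q.1 ∈ I ∧ q.2 = spec q.1}.Finite := by
      have hsubJ : {q : ↥A × (↥Nall ⊕ Finset ↥Nall) | ↑q.1 ∈ I ∧ q.2 = spec q.1} ⊆
          (fun ξ : ↥A => (ξ, spec ξ)) '' (Subtype.val ⁻¹' (I : Set ι)) := by
        rintro ⟨ξ, w⟩ ⟨h1, h2⟩
        exact ⟨ξ, Finset.mem_coe.2 h1, Prod.ext rfl h2.symm⟩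
      exact ((Set.Finite.preimage Subtype.val_injective.injOn I.finite_toSet).image _).subset hsubJ
    set j : Finset (↥A × (↥Nall ⊕ Finset ↥Nall)) := hJfin.toFinset with hjdef
    have hxO : x ∈ O j := by
      rintro ⟨ξ, w⟩ hq
      rw [hjdef, Set.Finite.mem_toFinset] at hq
      obtain ⟨hqI, hq2⟩ := hq
      simp only at hq2 ⊢
      rw [hq2]
      simp only [hspecdef]
      by_cases hs : ∃ α : ↥Nall, x ↑ξ = OnePoint.some ↑α
      · rw [dif_pos hs]
        simp only [Sum.elim_inl]
        exact hs.choose_spec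
      · rw [dif_neg hs]
        split_ifs with hfin
        · simp only [Sum.elim_inr]
          intro ν _ heq
          exact hs ⟨ν, heq⟩
        · simp only [Sum.elim_inr]
          intro ν _ heq
          exact hs ⟨ν, heq⟩
    have hjne : ((K ∩ K₀) ∩ O j).Nonempty := ⟨x, ⟨hxK, hxK₀⟩, hxO⟩
    obtain ⟨⟨hsK, hsK₀⟩, hsO⟩ := hsel j hjne
    -- sel j matches uu on I ∩ A
    have hsI : ∀ i, i ∈ A → i ∈ I → sel j i ∈ uu i := by
      intro i hiA hiI
      have hqj : ((⟨i, hiA⟩ : ↥A), spec ⟨i, hiA⟩) ∈ j := by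
        rw [hjdef, Set.Finite.mem_toFinset]
        exact ⟨hiI, rfl⟩
      have hcond := hsO _ hqj
      by_cases hs : ∃ α : ↥Nall, x i = OnePoint.some ↑α
      · have hspecval : spec ⟨i, hiA⟩ = Sum.inl hs.choose := by
          simp only [hspecdef]
          exact dif_pos hs
        rw [hspecval] at hcond
        simp only [Sum.elim_inl] at hcond
        rw [hcond, ← hs.choose_spec]
        exact hxiuu i hiI
      · -- x i = ∞
        have hxi : x i = OnePoint.infty := by
          by_contra hinfty
          obtain ⟨α, hα⟩ := Option.ne_none_iff_exists'.1 hinfty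
          have hαN : α ∈ N i := ⟨x, hxK₀, hα⟩
          exact hs ⟨⟨α, mem_iUnion.2 ⟨⟨i, hiA⟩, hαN⟩⟩, hα⟩
        have hinf : OnePoint.infty ∈ uu i := hxi ▸ hxiuu i hiI
        have hfin : {ν : ↥Nall | OnePoint.some ↑ν ∉ uu i}.Finite := by
          obtain ⟨hcpt, -⟩ := (OnePoint.isOpen_iff_of_mem' hinf).1 (huu i hiI).1
          have hfinZ : ((OnePoint.some ⁻¹' uu i : Set Z)ᶜ).Finite :=
            hcpt.finite_of_discrete
          exact Set.Finite.preimage Subtype.val_injective.injOn hfinZ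
        have hspecval : spec ⟨i, hiA⟩ = Sum.inr hfin.toFinset := by
          simp only [hspecdef]
          rw [dif_neg hs, dif_pos hfin]
        rw [hspecval] at hcond
        simp only [Sum.elim_inr] at hcond
        by_cases hselinfty : sel j i = OnePoint.infty
        · rw [hselinfty]; exact hinf
        · obtain ⟨γ, hγ⟩ := Option.ne_none_iff_exists'.1 hselinfty
          have hγN : γ ∈ N i := ⟨sel j, hsK₀, hγ⟩
          have hγNall : γ ∈ Nall := mem_iUnion.2 ⟨⟨i, hiA⟩, hγN⟩
          by_contra hnot
          have hmem : (⟨γ, hγNall⟩ : ↥Nall) ∈ hfin.toFinset := by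
            rw [Set.Finite.mem_toFinset]
            intro hmem2
            apply hnot
            rw [hγ]
            exact hmem2
          exact hcond _ hmem hγ
    -- pick a tail from D₀
    have hI'open : IsOpen (((I.filter (fun i => i ∉ A)) : Set ι).pi uu) :=
      isOpen_set_pi (I.filter (fun i => i ∉ A)).finite_toSet
        (fun a ha => (huu a (Finset.mem_filter.1 (Finset.mem_coe.1 ha)).1).1)
    have hxI' : x ∈ ((I.filter (fun i => i ∉ A)) : Set ι).pi uu :=
      fun a ha => hxiuu a (Finset.mem_filter.1 (Finset.mem_coe.1 ha)).1
    obtain ⟨y, hyI', hyD₀⟩ := hD₀dense _ hI'open ⟨x, hxI', hxK₀⟩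
    have hzpi : cmb (sel j) y ∈ (I : Set ι).pi uu := by
      intro a ha
      have haI : a ∈ I := Finset.mem_coe.1 ha
      by_cases haA : a ∈ A
      · have hval : cmb (sel j) y a = sel j a := if_pos haA
        rw [hval]
        exact hsI a haA haI
      · have hval : cmb (sel j) y a = y a := if_neg haA
        rw [hval]
        exact hyI' a (Finset.mem_coe.2 (Finset.mem_filter.2 ⟨haI, haA⟩))
    have hzV : f (cmb (sel j) y) ∈ V := hsub hzpi
    have hzT : f (cmb (sel j) y) ∈ T := ⟨cmb (sel j) y, ⟨j, hjne, y, hyD₀, rfl⟩, rfl⟩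
    exact ⟨⟨f (cmb (sel j) y), hTH hzT⟩, hzV, hzT⟩
  have hEcard : #(Subtype.val ⁻¹' T : Set ↥H) ≤ lam :=
    (mk_preimage_of_injective _ _ Subtype.val_injective).trans hTcard
  have hfinal : tdensity ↥H ≤ #(Subtype.val ⁻¹' T : Set ↥H) :=
    csInf_le' ⟨_, hEdense, rfl⟩
  exact hfinal.trans hEcard

/-- Corollary 2.4 (co:po). -/
theorem statement5 {X : Type u} [TopologicalSpace X] [CompactSpace X] [T2Space X]
    (hX : IsPolyadic X) (lam : Cardinal.{u}) (hlam : ℵ₀ ≤ lam)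
    (h1 : tdensity X ≤ lam) (h2 : lam ≤ tweight X) :
    InGamma lam X := by
  obtain ⟨μ, κ, hμ, f, hfc, hfs⟩ := hX
  exact gamma_aux (ι := κ.out) (Z := μ.out) f hfc hfs lam hlam h1
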